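/- Let G = ⊕_{i∈I} G_i where each G_i has torsion-free rank 1 with torsion subgroup T_i. For G_i, G_j write G_i ≾ G_j if there is a homomorphism G_i → G_j whose image is not contained in T_j. If for every n ∈ ℕ there exist n distinct indices i_1, …, i_n with G_{i_1} ≾ G_{i_2} ≾ ⋯ ≾ G_{i_n}, then G is not strongly Hopfian. -/

import Mathlib

open scoped TensorProduct DirectSum

/-- An abelian group is strongly Hopfian if for every endomorphism `φ`,
the ascending chain `ker φ ≤ ker φ² ≤ …` is eventually stationary. -/
def StronglyHopfian (G : Type*) [AddCommGroup G] : Prop :=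
  ∀ φ : AddMonoid.End G, ∃ n : ℕ, ∀ m : ℕ, n ≤ m →
    AddMonoidHom.ker (φ ^ m : G →+ G) = AddMonoidHom.ker (φ ^ n : G →+ G)

/-- `G ≾ G'`: there is a homomorphism `G → G'` whose image is not contained
in the torsion subgroup of `G'`. -/
def WalkLE (G G' : Type*) [AddCommGroup G] [AddCommGroup G'] : Prop :=
  ∃ f : G →+ G', ¬ f.range ≤ AddCommGroup.torsion G'

section TorsionLemmas
variable {B : Type*} [AddCommGroup B]

lemma aux_mem_torsion_iff_zsmul (x : B) :
    x ∈ AddCommGroup.torsion B ↔ ∃ n : ℤ, n ≠ 0 ∧ n • x = 0 := by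
  rw [AddCommGroup.mem_torsion, isOfFinAddOrder_iff_nsmul_eq_zero]
  constructor
  · rintro ⟨n, hn, h⟩
    exact ⟨(n:ℤ), by exact_mod_cast hn.ne', by simpa using h⟩
  · rintro ⟨n, hn, h⟩
    refine ⟨n.natAbs, Int.natAbs_pos.2 hn, ?_⟩
    rcases Int.natAbs_eq n with he | he
    · have : (n.natAbs : ℤ) • x = 0 := by rw [← he]; exact h
      simpa using this
    · have : (-(n.natAbs : ℤ)) • x = 0 := by rw [← he]; exact h
      rw [neg_smul, neg_eq_zero] at this; simpa using this

lemma aux_torsion_zsmul_iff {x : B} {n : ℤ} (hn : n ≠ 0) :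
    n • x ∈ AddCommGroup.torsion B ↔ x ∈ AddCommGroup.torsion B := by
  rw [aux_mem_torsion_iff_zsmul, aux_mem_torsion_iff_zsmul]
  constructor
  · rintro ⟨m, hm, h⟩
    exact ⟨m * n, mul_ne_zero hm hn, by rwa [mul_smul]⟩
  · rintro ⟨m, hm, h⟩
    exact ⟨m, hm, by rw [smul_comm, h, smul_zero]⟩

lemma aux_torsion_map {C : Type*} [AddCommGroup C] (g : B →+ C) {x : B}
    (hx : x ∈ AddCommGroup.torsion B) : g x ∈ AddCommGroup.torsion C := by
  rw [aux_mem_torsion_iff_zsmul] at hx ⊢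
  obtain ⟨n, hn, h⟩ := hx
  exact ⟨n, hn, by rw [← map_zsmul, h, map_zero]⟩

lemma aux_loc : IsLocalizedModule (nonZeroDivisors ℤ) (TensorProduct.mk ℤ ℚ B 1) := by
  rw [isLocalizedModule_iff_isBaseChange (nonZeroDivisors ℤ) ℚ]
  exact TensorProduct.isBaseChange ℤ B ℚ

lemma aux_tensor_eq_zero_iff (x : B) :
    (1 : ℚ) ⊗ₜ[ℤ] x = 0 ↔ x ∈ AddCommGroup.torsion B := by
  haveI := aux_loc (B := B)
  have h := IsLocalizedModule.eq_zero_iff (nonZeroDivisors ℤ) (TensorProduct.mk ℤ ℚ B 1) (m := x)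
  simp only [TensorProduct.mk_apply] at h
  rw [h, aux_mem_torsion_iff_zsmul]
  constructor
  · rintro ⟨⟨s, hs⟩, h0⟩
    exact ⟨s, nonZeroDivisors.ne_zero hs, h0⟩
  · rintro ⟨n, hn, h0⟩
    exact ⟨⟨n, mem_nonZeroDivisors_of_ne_zero hn⟩, h0⟩

lemma aux_nontorsion_dep (hrk : Module.finrank ℚ (ℚ ⊗[ℤ] B) = 1) {y z : B}
    (hy : y ∉ AddCommGroup.torsion B) (hz : z ∉ AddCommGroup.torsion B) :
    ∃ a b : ℤ, a ≠ 0 ∧ b ≠ 0 ∧ a • y - b • z ∈ AddCommGroup.torsion B := by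
  have hu : (1 : ℚ) ⊗ₜ[ℤ] y ≠ 0 := fun h => hy ((aux_tensor_eq_zero_iff y).1 h)
  have hv : (1 : ℚ) ⊗ₜ[ℤ] z ≠ 0 := fun h => hz ((aux_tensor_eq_zero_iff z).1 h)
  have hspan := (finrank_eq_one_iff_of_nonzero ((1 : ℚ) ⊗ₜ[ℤ] z) hv).1 hrk
  have hmem : (1 : ℚ) ⊗ₜ[ℤ] y ∈ Submodule.span ℚ {(1 : ℚ) ⊗ₜ[ℤ] z} := hspan ▸ Submodule.mem_top
  obtain ⟨q, hq⟩ := Submodule.mem_span_singleton.1 hmem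
  have hqne : q ≠ 0 := by rintro rfl; simp at hq; exact hu hq.symm
  refine ⟨(q.den : ℤ), q.num, by exact_mod_cast q.den_nz, Rat.num_ne_zero.2 hqne, ?_⟩
  rw [← aux_tensor_eq_zero_iff]
  have h0 : (1 : ℚ) ⊗ₜ[ℤ] ((q.den : ℤ) • y - q.num • z)
      = (q.den : ℤ) • ((1:ℚ) ⊗ₜ[ℤ] y) - q.num • ((1:ℚ) ⊗ₜ[ℤ] z) := by
    simp [TensorProduct.tmul_sub, TensorProduct.tmul_smul]
  rw [h0, ← hq]
  have h1 : (q.den : ℤ) • (q • ((1:ℚ) ⊗ₜ[ℤ] z)) = ((q.den : ℚ) * q) • ((1:ℚ) ⊗ₜ[ℤ] z) := by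
    rw [← Int.cast_smul_eq_zsmul ℚ, smul_smul]; norm_num
  have h2 : q.num • ((1:ℚ) ⊗ₜ[ℤ] z) = ((q.num : ℚ)) • ((1:ℚ) ⊗ₜ[ℤ] z) := by
    rw [← Int.cast_smul_eq_zsmul ℚ]
  rw [h1, h2, mul_comm, Rat.mul_den_eq_num, sub_self]

lemma aux_walkLE_comp {C D : Type*} [AddCommGroup C] [AddCommGroup D]
    (hrk : Module.finrank ℚ (ℚ ⊗[ℤ] B) = 1) {f : C →+ B} {g : B →+ D}
    (hf : ¬ f.range ≤ AddCommGroup.torsion B)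
    (hg : ¬ g.range ≤ AddCommGroup.torsion D) :
    ¬ (g.comp f).range ≤ AddCommGroup.torsion D := by
  rw [SetLike.not_le_iff_exists] at hf hg ⊢
  obtain ⟨y, ⟨c, rfl⟩, hy⟩ := hf
  obtain ⟨z, ⟨b, rfl⟩, hz⟩ := hg
  have hbnt : b ∉ AddCommGroup.torsion B := fun hb => hz (aux_torsion_map g hb)
  obtain ⟨a, b', ha, hb', ht⟩ := aux_nontorsion_dep hrk hy hbnt
  refine ⟨(g.comp f) c, ⟨c, rfl⟩, fun hmem => ?_⟩
  have h1 : a • g (f c) - b' • g b = g (a • f c - b' • b) := by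
    rw [map_sub, map_zsmul, map_zsmul]
  have h2 : a • g (f c) - b' • g b ∈ AddCommGroup.torsion D := h1 ▸ aux_torsion_map g ht
  have h3 : a • g (f c) ∈ AddCommGroup.torsion D := by
    simpa using (aux_torsion_zsmul_iff ha).2 hmem
  have h4 : b' • g b ∈ AddCommGroup.torsion D := by
    have := sub_mem h3 h2
    simpa using this
  exact hz ((aux_torsion_zsmul_iff hb').1 h4)

lemma aux_walkLE_trans {C D : Type*} [AddCommGroup C] [AddCommGroup D]
    (hrk : Module.finrank ℚ (ℚ ⊗[ℤ] B) = 1) (h1 : WalkLE C B) (h2 : WalkLE B D) :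
    WalkLE C D := by
  obtain ⟨f, hf⟩ := h1
  obtain ⟨g, hg⟩ := h2
  exact ⟨g.comp f, aux_walkLE_comp hrk hf hg⟩

end TorsionLemmas

section Chains
variable {I : Type*} (A : I → Type*) [∀ i, AddCommGroup (A i)]

lemma aux_chain_walk (hrk : ∀ i, Module.finrank ℚ (ℚ ⊗[ℤ] A i) = 1) {N : ℕ} {s : Fin N → I}
    (hs : ∀ k : Fin N, ∀ h : (k : ℕ) + 1 < N, WalkLE (A (s k)) (A (s ⟨(k : ℕ) + 1, h⟩))) :
    ∀ (l j : Fin N), j < l → WalkLE (A (s j)) (A (s l)) := by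
  rintro ⟨lv, hl⟩
  induction lv with
  | zero => intro j hj; simp [Fin.lt_def] at hj
  | succ m ih =>
    intro j hj
    have hj' : (j : ℕ) < m + 1 := by simpa [Fin.lt_def] using hj
    have hm : m < N := by omega
    rcases eq_or_lt_of_le (Nat.lt_succ_iff.1 hj') with he | hlt
    · have h2 : (j : ℕ) + 1 < N := by omega
      have := hs j h2
      have hjm : (⟨(j : ℕ) + 1, h2⟩ : Fin N) = ⟨m + 1, hl⟩ := by
        ext; simp [he]
      rwa [hjm] at this
    · exact aux_walkLE_trans (hrk (s ⟨m, hm⟩)) (ih hm j (Fin.lt_def.2 hlt)) (hs ⟨m, hm⟩ hl)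

lemma aux_exists_avoiding (hrk : ∀ i, Module.finrank ℚ (ℚ ⊗[ℤ] A i) = 1)
    (hchain : ∀ n : ℕ, ∃ s : Fin n → I, Function.Injective s ∧
      ∀ k : Fin n, ∀ h : (k : ℕ) + 1 < n, WalkLE (A (s k)) (A (s ⟨(k : ℕ) + 1, h⟩)))
    (used : Finset I) (n : ℕ) :
    ∃ f : Fin (n + 2) → I, Function.Injective f ∧
      (∀ k : Fin (n + 2), ∀ h : (k : ℕ) + 1 < n + 2,
        WalkLE (A (f k)) (A (f ⟨(k : ℕ) + 1, h⟩))) ∧ ∀ k, f k ∉ used := by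
  classical
  obtain ⟨s, sinj, schain⟩ := hchain (n + 2 + used.card)
  have hbc : (Finset.univ.filter (fun k => s k ∈ used)).card ≤ used.card := by
    apply Finset.card_le_card_of_injOn s
    · intro k hk; simp at hk; exact hk
    · exact sinj.injOn
  have hgc : n + 2 ≤ (Finset.univ.filter (fun k => s k ∉ used)).card := by
    have h2 := Finset.card_filter_add_card_filter_not
      (s := (Finset.univ : Finset (Fin (n + 2 + used.card)))) (p := fun k => s k ∈ used)
    simp only [Finset.card_univ, Fintype.card_fin] at h2
    omega
  obtain ⟨sub, hsub, hcard⟩ := Finset.exists_subset_card_eq hgc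
  refine ⟨s ∘ sub.orderEmbOfFin hcard, sinj.comp (sub.orderEmbOfFin hcard).injective, ?_, ?_⟩
  · intro k h
    have hlt : sub.orderEmbOfFin hcard k < sub.orderEmbOfFin hcard ⟨(k : ℕ) + 1, h⟩ := by
      apply (sub.orderEmbOfFin hcard).strictMono
      exact Fin.mk_lt_mk.2 (Nat.lt_succ_self _)
    exact aux_chain_walk A hrk schain _ _ hlt
  · intro k
    have h1 : sub.orderEmbOfFin hcard k ∈ sub := Finset.orderEmbOfFin_mem sub hcard k
    have h2 := hsub h1
    simp at h2
    exact h2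

end Chains

section Construction
set_option linter.unusedSectionVars false
variable {I : Type*} (A : I → Type*) [∀ i, AddCommGroup (A i)] [DecidableEq I]
variable (EA : ∀ (used : Finset I) (n : ℕ),
    ∃ f : Fin (n + 2) → I, Function.Injective f ∧
      (∀ k : Fin (n + 2), ∀ h : (k : ℕ) + 1 < n + 2,
        WalkLE (A (f k)) (A (f ⟨(k : ℕ) + 1, h⟩))) ∧ ∀ k, f k ∉ used)

noncomputable def chainC : ∀ n : ℕ, Fin (n + 2) → I
  | n =>
    (EA
      ((Finset.range n).attach.biUnion fun m =>
        Finset.image (chainC (m : ℕ)) Finset.univ) n).choose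
termination_by n => n
decreasing_by all_goals exact Finset.mem_range.mp m.2

lemma chainC_def (n : ℕ) : chainC A EA n =
    (EA
      ((Finset.range n).attach.biUnion fun m =>
        Finset.image (chainC A EA (m : ℕ)) Finset.univ) n).choose := by
  rw [chainC]

lemma chainC_inj (n : ℕ) : Function.Injective (chainC A EA n) := by
  rw [chainC_def]
  exact (EA _ n).choose_spec.1

lemma chainC_chain (n : ℕ) : ∀ k : Fin (n + 2), ∀ h : (k : ℕ) + 1 < n + 2,
    WalkLE (A (chainC A EA n k)) (A (chainC A EA n ⟨(k : ℕ) + 1, h⟩)) := by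
  rw [chainC_def]
  exact (EA _ n).choose_spec.2.1

lemma chainC_avoid {n m : ℕ} (hm : m < n) (k : Fin (n + 2)) (k' : Fin (m + 2)) :
    chainC A EA n k ≠ chainC A EA m k' := by
  intro he
  have h1 := (EA
      ((Finset.range n).attach.biUnion fun m =>
        Finset.image (chainC A EA (m : ℕ)) Finset.univ) n).choose_spec.2.2 k
  rw [← chainC_def] at h1
  apply h1
  rw [Finset.mem_biUnion]
  exact ⟨⟨m, Finset.mem_range.mpr hm⟩, Finset.mem_attach _ _,
    Finset.mem_image.mpr ⟨k', Finset.mem_univ _, he.symm⟩⟩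

noncomputable def castHom {i j : I} (h : i = j) : A i →+ A j := by
  subst h; exact AddMonoidHom.id _

@[simp] lemma castHom_rfl {i : I} (h : i = i) : castHom A h = AddMonoidHom.id (A i) := rfl

noncomputable def startP (p : Σ n : ℕ, Fin (n + 1)) : I :=
  chainC A EA p.1 ⟨(p.2 : ℕ), Nat.lt_succ_of_lt p.2.isLt⟩

noncomputable def tgtP (p : Σ n : ℕ, Fin (n + 1)) : I :=
  chainC A EA p.1 ⟨(p.2 : ℕ) + 1, Nat.succ_lt_succ p.2.isLt⟩

lemma startP_inj : Function.Injective (startP A EA) := by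
  rintro ⟨n, k⟩ ⟨m, l⟩ h
  rcases lt_trichotomy n m with hlt | rfl | hlt
  · exact absurd h.symm (chainC_avoid A EA hlt _ _)
  · have := chainC_inj A EA n h
    simp only [Fin.mk.injEq] at this
    simp [Fin.ext_iff, this]
  · exact absurd h (chainC_avoid A EA hlt _ _)

lemma walk_startP (p : Σ n : ℕ, Fin (n + 1)) :
    WalkLE (A (startP A EA p)) (A (tgtP A EA p)) :=
  chainC_chain A EA p.1 ⟨(p.2 : ℕ), Nat.lt_succ_of_lt p.2.isLt⟩ (Nat.succ_lt_succ p.2.isLt)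

noncomputable def Fmap (p : Σ n : ℕ, Fin (n + 1)) : A (startP A EA p) →+ A (tgtP A EA p) :=
  (walk_startP A EA p).choose

lemma Fmap_spec (p : Σ n : ℕ, Fin (n + 1)) :
    ¬ (Fmap A EA p).range ≤ AddCommGroup.torsion (A (tgtP A EA p)) :=
  (walk_startP A EA p).choose_spec

open Classical in
noncomputable def psi (i : I) : A i →+ ⨁ i, A i :=
  if h : ∃ p : Σ n : ℕ, Fin (n + 1), startP A EA p = i then
    ((DirectSum.of A (tgtP A EA h.choose)).comp (Fmap A EA h.choose)).comp
      (castHom A h.choose_spec.symm)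
  else 0

lemma psi_startP (p : Σ n : ℕ, Fin (n + 1)) :
    psi A EA (startP A EA p) = (DirectSum.of A (tgtP A EA p)).comp (Fmap A EA p) := by
  have key : ∀ (i : I) (hp : startP A EA p = i), psi A EA i =
      ((DirectSum.of A (tgtP A EA p)).comp (Fmap A EA p)).comp (castHom A hp.symm) := by
    intro i hp
    have h : ∃ q : Σ n : ℕ, Fin (n + 1), startP A EA q = i := ⟨p, hp⟩
    rw [psi, dif_pos h]
    have hq : h.choose = p := startP_inj A EA (h.choose_spec.trans hp.symm)
    subst hq
    rfl
  have := key (startP A EA p) rfl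
  rwa [castHom_rfl, AddMonoidHom.comp_id] at this

lemma psi_notStart {i : I} (h : ¬ ∃ p : Σ n : ℕ, Fin (n + 1), startP A EA p = i) :
    psi A EA i = 0 := by
  rw [psi, dif_neg h]

noncomputable def phi : AddMonoid.End (⨁ i, A i) := DirectSum.toAddMonoid (psi A EA)

lemma end_not_start (n : ℕ) :
    ¬ ∃ p : Σ n : ℕ, Fin (n + 1), startP A EA p = chainC A EA n ⟨n + 1, by omega⟩ := by
  rintro ⟨⟨m, k⟩, h⟩
  rcases lt_trichotomy m n with hlt | rfl | hlt
  · exact chainC_avoid A EA hlt _ _ h.symm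
  · have := chainC_inj A EA m h
    simp only [Fin.mk.injEq] at this
    omega
  · exact chainC_avoid A EA hlt _ _ h

noncomputable def Cmp (n : ℕ) : ∀ (k : ℕ) (h : k < n + 2),
    A (chainC A EA n ⟨0, by omega⟩) →+ A (chainC A EA n ⟨k, h⟩)
  | 0, _ => AddMonoidHom.id _
  | (k + 1), h => (Fmap A EA ⟨n, ⟨k, by omega⟩⟩).comp (Cmp n k (by omega))

lemma Cmp_nontor (hrk : ∀ i, Module.finrank ℚ (ℚ ⊗[ℤ] A i) = 1) (n : ℕ) :
    ∀ (k : ℕ) (h : k + 1 < n + 2),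
    ¬ (Cmp A EA n (k + 1) h).range ≤ AddCommGroup.torsion (A (chainC A EA n ⟨k + 1, h⟩)) := by
  intro k
  induction k with
  | zero =>
    intro h
    have he : Cmp A EA n 1 h = Fmap A EA ⟨n, ⟨0, by omega⟩⟩ := AddMonoidHom.comp_id _
    rw [he]
    exact Fmap_spec A EA ⟨n, ⟨0, by omega⟩⟩
  | succ k ih =>
    intro h
    exact aux_walkLE_comp (hrk _) (ih (by omega)) (Fmap_spec A EA ⟨n, ⟨k + 1, by omega⟩⟩)

lemma phi_of_start (p : Σ n : ℕ, Fin (n + 1)) (x : A (startP A EA p)) :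
    phi A EA (DirectSum.of A (startP A EA p) x) = DirectSum.of A (tgtP A EA p) (Fmap A EA p x) := by
  show (DirectSum.toAddMonoid (psi A EA) : (⨁ i, A i) →+ ⨁ i, A i) (DirectSum.of A (startP A EA p) x) = _
  rw [DirectSum.toAddMonoid_of, psi_startP]
  rfl

lemma phi_pow (n : ℕ) : ∀ (k : ℕ) (h : k < n + 2) (x : A (chainC A EA n ⟨0, by omega⟩)),
    (phi A EA ^ k) (DirectSum.of A (chainC A EA n ⟨0, by omega⟩) x)
      = DirectSum.of A (chainC A EA n ⟨k, h⟩) (Cmp A EA n k h x) := by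
  intro k
  induction k with
  | zero =>
    intro h x
    simp only [pow_zero, AddMonoid.End.one_apply]
    rfl
  | succ k ih =>
    intro h x
    rw [pow_succ']
    show phi A EA ((phi A EA ^ k) _) = _
    rw [ih (by omega)]
    exact phi_of_start A EA ⟨n, ⟨k, by omega⟩⟩ _

lemma phi_kill (n : ℕ) (x : A (chainC A EA n ⟨n + 1, by omega⟩)) :
    phi A EA (DirectSum.of A (chainC A EA n ⟨n + 1, by omega⟩) x) = 0 := by
  show (DirectSum.toAddMonoid (psi A EA) : (⨁ i, A i) →+ ⨁ i, A i) (DirectSum.of A _ x) = _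
  rw [DirectSum.toAddMonoid_of, psi_notStart A EA (end_not_start A EA n)]
  rfl

end Construction

theorem stmt17 {I : Type*} (A : I → Type*) [∀ i, AddCommGroup (A i)]
    (hrk : ∀ i, Module.finrank ℚ (ℚ ⊗[ℤ] A i) = 1)
    (hchain : ∀ n : ℕ, ∃ s : Fin n → I, Function.Injective s ∧
      ∀ k : Fin n, ∀ h : (k : ℕ) + 1 < n, WalkLE (A (s k)) (A (s ⟨(k : ℕ) + 1, h⟩))) :
    ¬ StronglyHopfian (⨁ i, A i) := by
  classical
  intro hSH
  set EA := aux_exists_avoiding A hrk hchain with hEA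
  obtain ⟨N, hN⟩ := hSH (phi A EA)
  -- take the chain number N : it has N + 2 vertices, N + 1 arrows
  have hnt := Cmp_nontor A EA hrk N N (by omega)
  rw [SetLike.not_le_iff_exists] at hnt
  obtain ⟨y, ⟨x, rfl⟩, hy⟩ := hnt
  set e := DirectSum.of A (chainC A EA N ⟨0, by omega⟩) x with he
  -- e is killed by phi ^ (N + 2)
  have hker2 : (phi A EA ^ (N + 2)) e = 0 := by
    rw [pow_succ']
    show phi A EA ((phi A EA ^ (N + 1)) e) = _
    rw [phi_pow A EA N (N + 1) (by omega) x]
    exact phi_kill A EA N _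
  -- but not by phi ^ N
  have hker1 : (phi A EA ^ N) e ≠ 0 := by
    rw [phi_pow A EA N N (by omega) x]
    intro h0
    have hx0 : Cmp A EA N N (by omega) x = 0 := DirectSum.of_injective _ (by simpa using h0)
    apply hy
    have : Cmp A EA N (N + 1) (by omega) x
        = Fmap A EA ⟨N, ⟨N, by omega⟩⟩ (Cmp A EA N N (by omega) x) := rfl
    rw [this, hx0]
    show (Fmap A EA ⟨N, ⟨N, _⟩⟩) 0 ∈ AddCommGroup.torsion (A (tgtP A EA ⟨N, ⟨N, _⟩⟩))
    rw [map_zero]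
    exact zero_mem _
  have h2 := hN (N + 2) (by omega)
  have he2 : e ∈ AddMonoidHom.ker (phi A EA ^ (N + 2) : (⨁ i, A i) →+ ⨁ i, A i) := hker2
  rw [h2] at he2
  exact hker1 he2
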